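/- Let Q be an n×n real matrix that is entrywise nonnegative with every column sum at most 1 (Σ_i Q_{ij} ≤ 1 for all j), and let P = diag(p_1, …, p_n) be a diagonal matrix with 0 ≤ p_j < 1 for all j. Then I − QP is invertible and every column sum of the matrix A = (I − P)(I − QP)^{−1} is at most 1; consequently the spectral radius of A is at most 1. -/
import Mathlib


open scoped ENNReal
open Matrix
open scoped NNReal

/-- The spectral radius of a real square matrix: the supremum of the moduli of its
complex eigenvalues (the spectrum of the matrix viewed as a complex matrix). -/
noncomputable def specRad {n : ℕ} (M : Matrix (Fin n) (Fin n) ℝ) : ℝ≥0∞ :=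
  spectralRadius ℂ (M.map fun a => (a : ℂ))

attribute [local instance] Matrix.linftyOpNormedRing Matrix.linftyOpNormedAlgebra

lemma spectrum_transpose_eq {n : ℕ} (M : Matrix (Fin n) (Fin n) ℂ) :
    spectrum ℂ Mᵀ = spectrum ℂ M := by
  ext z
  have h : algebraMap ℂ (Matrix (Fin n) (Fin n) ℂ) z - Mᵀ =
      (algebraMap ℂ (Matrix (Fin n) (Fin n) ℂ) z - M)ᵀ := by
    rw [transpose_sub]
    congr 1
    simp [Algebra.algebraMap_eq_smul_one, transpose_smul]
  rw [spectrum.mem_iff, spectrum.mem_iff, Matrix.isUnit_iff_isUnit_det,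
    Matrix.isUnit_iff_isUnit_det, h, Matrix.det_transpose]

/-- **Column sums of the system matrix are at most one.**
If `Q` is entrywise nonnegative with every column sum at most `1`, and `P = diagonal p`
with `0 ≤ p j < 1` for all `j`, then `I - Q * P` is invertible, every column sum of
`A = (I - P) * (I - Q * P)⁻¹` is at most `1`, and consequently the spectral radius of
`A` is at most `1`. -/
theorem system_matrix_colSum_le_one {n : ℕ} (Q : Matrix (Fin n) (Fin n) ℝ)
    (p : Fin n → ℝ) (hQ : ∀ i j, 0 ≤ Q i j) (hQcol : ∀ j, ∑ i, Q i j ≤ 1)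
    (hp0 : ∀ j, 0 ≤ p j) (hp1 : ∀ j, p j < 1) :
    IsUnit (1 - Q * diagonal p) ∧
      (∀ j, ∑ i, ((1 - diagonal p) * (1 - Q * diagonal p)⁻¹) i j ≤ 1) ∧
      specRad ((1 - diagonal p) * (1 - Q * diagonal p)⁻¹) ≤ 1 := by
  classical
  set B := Q * diagonal p with hB
  have hBapp : ∀ i j, B i j = Q i j * p j := fun i j => by
    rw [hB, mul_diagonal]
  have hBnn : ∀ i j, 0 ≤ B i j := fun i j => by
    rw [hBapp]; exact mul_nonneg (hQ i j) (hp0 j)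
  haveI : CompleteSpace (Matrix (Fin n) (Fin n) ℝ) := FiniteDimensional.complete ℝ _
  -- norm of the transpose is < 1
  have hNnorm : ‖Bᵀ‖₊ < 1 := by
    rw [Matrix.linfty_opNNNorm_def]
    refine (Finset.sup_lt_iff (α := ℝ≥0) (by norm_num)).mpr ?_
    intro i _
    have hcoe : ((∑ j, ‖Bᵀ i j‖₊ : ℝ≥0) : ℝ) < 1 := by
      push_cast
      have : ∀ j, (‖Bᵀ i j‖ : ℝ) = Q j i * p i := fun j => by
        rw [transpose_apply, Real.norm_eq_abs, abs_of_nonneg (hBnn j i), hBapp]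
      calc ∑ j, (‖Bᵀ i j‖ : ℝ) = ∑ j, Q j i * p i := by
            exact Finset.sum_congr rfl fun j _ => this j
        _ = (∑ j, Q j i) * p i := by rw [Finset.sum_mul]
        _ ≤ 1 * p i := mul_le_mul_of_nonneg_right (hQcol i) (hp0 i)
        _ = p i := one_mul _
        _ < 1 := hp1 i
    exact_mod_cast hcoe
  have hNlt : ‖Bᵀ‖ < 1 := by
    rw [← coe_nnnorm]; exact_mod_cast hNnorm
  have hUnitN : IsUnit (1 - Bᵀ) := isUnit_one_sub_of_norm_lt_one hNlt
  have hTeq : (1 - B)ᵀ = 1 - Bᵀ := by rw [transpose_sub, transpose_one]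
  have hUnitB : IsUnit (1 - B) := by
    rw [Matrix.isUnit_iff_isUnit_det, ← Matrix.det_transpose, hTeq,
      ← Matrix.isUnit_iff_isUnit_det]
    exact hUnitN
  -- the Neumann series and entrywise nonnegativity of the inverse
  have hsum : HasSum (fun k => Bᵀ ^ k) (Ring.inverse (1 - Bᵀ)) :=
    hasSum_geom_series_inverse _ hNlt
  have hNpow : ∀ (k : ℕ) i j, 0 ≤ (Bᵀ ^ k) i j := by
    intro k
    induction k with
    | zero =>
      intro i j
      rw [pow_zero]
      by_cases h : i = j <;> simp [Matrix.one_apply, h]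
    | succ k ih =>
      intro i j
      rw [pow_succ, Matrix.mul_apply]
      exact Finset.sum_nonneg fun l _ =>
        mul_nonneg (ih i l) (by rw [transpose_apply]; exact hBnn j l)
  have hinvN : ∀ i j, 0 ≤ (Ring.inverse (1 - Bᵀ)) i j := by
    intro i j
    let e : Matrix (Fin n) (Fin n) ℝ →ₗ[ℝ] ℝ :=
      { toFun := fun M => M i j
        map_add' := fun _ _ => rfl
        map_smul' := fun _ _ => rfl }
    have hce : Continuous e := e.continuous_of_finiteDimensional
    have h2 : HasSum (fun k => e (Bᵀ ^ k)) (e (Ring.inverse (1 - Bᵀ))) :=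
      hsum.map e.toAddMonoidHom hce
    exact hasSum_le (fun k => hNpow k i j) hasSum_zero h2
  set R := (1 - B)⁻¹ with hR
  have hRT : R = (Ring.inverse (1 - Bᵀ))ᵀ := by
    calc R = (Rᵀ)ᵀ := (transpose_transpose R).symm
      _ = (((1 - B)ᵀ)⁻¹)ᵀ := by rw [hR, Matrix.transpose_nonsing_inv]
      _ = ((1 - Bᵀ)⁻¹)ᵀ := by rw [hTeq]
      _ = (Ring.inverse (1 - Bᵀ))ᵀ := by rw [Matrix.nonsing_inv_eq_ringInverse]
  have hRnn : ∀ i j, 0 ≤ R i j := fun i j => by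
    rw [hRT, transpose_apply]; exact hinvN j i
  have hmulinv : (1 - B) * R = 1 :=
    Matrix.mul_nonsing_inv _ ((Matrix.isUnit_iff_isUnit_det _).mp hUnitB)
  -- key identity for column sums
  have key : ∀ j, ∑ k, (1 - p k * ∑ i, Q i k) * R k j = 1 := by
    intro j
    have h1 : ∑ i, ((1 - B) * R) i j = 1 := by
      rw [hmulinv]
      simp [Matrix.one_apply]
    calc ∑ k, (1 - p k * ∑ i, Q i k) * R k j
        = ∑ k, (∑ i, ((1 : Matrix (Fin n) (Fin n) ℝ) i k - B i k)) * R k j := by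
          refine Finset.sum_congr rfl fun k _ => ?_
          congr 1
          rw [Finset.sum_sub_distrib]
          congr 1
          · simp [Matrix.one_apply]
          · exact (calc ∑ i, B i k = ∑ i, Q i k * p k :=
                Finset.sum_congr rfl fun i _ => hBapp i k
              _ = (∑ i, Q i k) * p k := by rw [Finset.sum_mul]
              _ = p k * ∑ i, Q i k := mul_comm _ _).symm
      _ = ∑ k, ∑ i, ((1 : Matrix (Fin n) (Fin n) ℝ) i k - B i k) * R k j := by
          refine Finset.sum_congr rfl fun k _ => ?_
          rw [Finset.sum_mul]
      _ = ∑ i, ∑ k, ((1 : Matrix (Fin n) (Fin n) ℝ) i k - B i k) * R k j :=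
          Finset.sum_comm
      _ = ∑ i, ((1 - B) * R) i j := by
          refine Finset.sum_congr rfl fun i _ => ?_
          rw [Matrix.mul_apply]
          exact Finset.sum_congr rfl fun k _ => by rw [Matrix.sub_apply]
      _ = 1 := h1
  -- entries of A
  have hDiag : (1 : Matrix (Fin n) (Fin n) ℝ) - diagonal p = diagonal fun k => 1 - p k := by
    rw [← diagonal_one, diagonal_sub]
  have hAapp : ∀ i j, ((1 - diagonal p) * R) i j = (1 - p i) * R i j := by
    intro i j; rw [hDiag, diagonal_mul]
  have hAnn : ∀ i j, 0 ≤ ((1 - diagonal p) * R) i j := fun i j => by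
    rw [hAapp]
    exact mul_nonneg (by linarith [hp1 i]) (hRnn i j)
  -- column sums of A
  have hcol : ∀ j, ∑ i, ((1 - diagonal p) * R) i j ≤ 1 := by
    intro j
    have expand : ∑ i, ((1 - diagonal p) * R) i j = ∑ k, (1 - p k) * R k j :=
      Finset.sum_congr rfl fun i _ => hAapp i j
    rw [expand]
    calc ∑ k, (1 - p k) * R k j
        ≤ ∑ k, (1 - p k * ∑ i, Q i k) * R k j := by
          refine Finset.sum_le_sum fun k _ => mul_le_mul_of_nonneg_right ?_ (hRnn k j)
          have h2 : p k * ∑ i, Q i k ≤ p k := by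
            calc p k * ∑ i, Q i k ≤ p k * 1 :=
              mul_le_mul_of_nonneg_left (hQcol k) (hp0 k)
              _ = p k := mul_one _
          linarith
      _ = 1 := key j
  refine ⟨hUnitB, hcol, ?_⟩
  -- spectral radius bound
  unfold specRad
  set Ac := (((1 - diagonal p) * R).map fun a => (a : ℂ)) with hAc
  have hrad : spectralRadius ℂ Ac = spectralRadius ℂ Acᵀ := by
    unfold spectralRadius
    rw [spectrum_transpose_eq]
  rw [hrad]
  rcases Nat.eq_zero_or_pos n with h0 | hn
  · subst h0
    haveI : Subsingleton (Matrix (Fin 0) (Fin 0) ℂ) :=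
      ⟨fun a b => Matrix.ext fun i => i.elim0⟩
    have hempty : spectrum ℂ Acᵀ = ∅ := by
      ext z
      simp only [spectrum.mem_iff, Set.mem_empty_iff_false, iff_false, not_not]
      exact isUnit_of_subsingleton _
    unfold spectralRadius
    rw [hempty]
    simp
  · haveI : Nonempty (Fin n) := ⟨⟨0, hn⟩⟩
    have hnorm : ‖Acᵀ‖₊ ≤ 1 := by
      rw [Matrix.linfty_opNNNorm_def]
      refine Finset.sup_le ?_
      intro i _
      have hc : ((∑ j, ‖Acᵀ i j‖₊ : ℝ≥0) : ℝ) ≤ 1 := by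
        push_cast
        have hent : ∀ j, (‖Acᵀ i j‖ : ℝ) = ((1 - diagonal p) * R) j i := by
          intro j
          rw [transpose_apply, hAc, Matrix.map_apply, Complex.norm_real,
            Real.norm_eq_abs, abs_of_nonneg (hAnn j i)]
        calc ∑ j, (‖Acᵀ i j‖ : ℝ) = ∑ j, ((1 - diagonal p) * R) j i :=
              Finset.sum_congr rfl fun j _ => hent j
          _ ≤ 1 := hcol i
      exact_mod_cast hc
    calc spectralRadius ℂ Acᵀ ≤ (‖Acᵀ‖₊ : ℝ≥0∞) :=
        spectrum.spectralRadius_le_nnnorm (𝕜 := ℂ) Acᵀ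
      _ ≤ 1 := by exact_mod_cast hnorm
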